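/- Let (r_t)_{t≥0} be a nonnegative sequence satisfying r_{t+1} ≤ (1 − aγ_t)r_t + cγ_t², where 0 < a ≤ b, c ≥ 0, and all stepsizes satisfy γ_t ≤ 1/b. If K ≤ b/a and γ_t = 1/b for all t, then r_K ≤ exp(−aK/b)·r₀ + c/(a²K). -/

import Mathlib

theorem stmt13 (a b c : ℝ) (ha : 0 < a) (hab : a ≤ b) (hc : 0 ≤ c)
    (r : ℕ → ℝ) (hr : ∀ t, 0 ≤ r t)
    (hrec : ∀ t, r (t + 1) ≤ (1 - a * (1 / b)) * r t + c * (1 / b) ^ 2)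
    (K : ℕ) (hK : 0 < K) (hKb : (K : ℝ) ≤ b / a) :
    r K ≤ Real.exp (-(a * K) / b) * r 0 + c / (a ^ 2 * K) := by
  have hb : 0 < b := lt_of_lt_of_le ha hab
  set q : ℝ := 1 - a * (1 / b) with hq
  have hab1 : a * (1 / b) ≤ 1 := by
    rw [mul_one_div]
    exact (div_le_one hb).mpr hab
  have hq0 : 0 ≤ q := by rw [hq]; linarith
  have hq1 : q < 1 := by
    rw [hq]
    have : 0 < a * (1 / b) := by positivity
    linarith
  -- step 1: induction bound
  have key : ∀ n : ℕ, r n ≤ q ^ n * r 0 + c * (1 / b) ^ 2 * ∑ i ∈ Finset.range n, q ^ i := by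
    intro n
    induction n with
    | zero => simp
    | succ n ih =>
      calc r (n + 1) ≤ q * r n + c * (1 / b) ^ 2 := hrec n
        _ ≤ q * (q ^ n * r 0 + c * (1 / b) ^ 2 * ∑ i ∈ Finset.range n, q ^ i) + c * (1 / b) ^ 2 := by
            nlinarith [mul_le_mul_of_nonneg_left ih hq0]
        _ = q ^ (n + 1) * r 0 + c * (1 / b) ^ 2 * ∑ i ∈ Finset.range (n + 1), q ^ i := by
            rw [geom_sum_succ]
            ring
  -- step 2: bound q^K by exp
  have hexp : q ^ K ≤ Real.exp (-(a * K) / b) := by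
    have h1 : q ≤ Real.exp (-(a * (1 / b))) := by
      have := Real.add_one_le_exp (-(a * (1 / b)))
      linarith
    calc q ^ K ≤ (Real.exp (-(a * (1 / b)))) ^ K := pow_le_pow_left₀ hq0 h1 K
      _ = Real.exp (-(a * K) / b) := by
          rw [← Real.exp_nat_mul]; ring_nf
  -- step 3: bound geometric sum
  have hsum : ∑ i ∈ Finset.range K, q ^ i ≤ b / a := by
    have h1q : 1 - q = a / b := by rw [hq]; field_simp; ring
    have hgm := geom_sum_mul q K
    have hSb : (∑ i ∈ Finset.range K, q ^ i) * (1 - q) = 1 - q ^ K := by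
      linear_combination -hgm
    rw [h1q] at hSb
    have hle1 : (∑ i ∈ Finset.range K, q ^ i) * (a / b) ≤ 1 := by
      have := pow_nonneg hq0 K
      linarith
    calc ∑ i ∈ Finset.range K, q ^ i
        = (∑ i ∈ Finset.range K, q ^ i) * (a / b) * (b / a) := by field_simp
      _ ≤ 1 * (b / a) := mul_le_mul_of_nonneg_right hle1 (by positivity)
      _ = b / a := one_mul _
  have hcK : c * (1 / b) ^ 2 * (b / a) ≤ c / (a ^ 2 * K) := by
    have hKpos : (0:ℝ) < K := by exact_mod_cast hK
    have heq : c * (1 / b) ^ 2 * (b / a) = c / (a * b) := by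
      field_simp
    rw [heq]
    have hden : a ^ 2 * (K:ℝ) ≤ a * b := by
      have h := mul_le_mul_of_nonneg_left hKb (le_of_lt (mul_pos ha ha))
      have : a * a * (b / a) = a * b := by field_simp
      nlinarith
    exact div_le_div_of_nonneg_left hc (by positivity) hden
  calc r K ≤ q ^ K * r 0 + c * (1 / b) ^ 2 * ∑ i ∈ Finset.range K, q ^ i := key K
    _ ≤ Real.exp (-(a * K) / b) * r 0 + c / (a ^ 2 * K) := by
        have h1 := mul_le_mul_of_nonneg_right hexp (hr 0)
        have h2 : c * (1 / b) ^ 2 * ∑ i ∈ Finset.range K, q ^ i ≤ c / (a ^ 2 * K) :=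
          le_trans (mul_le_mul_of_nonneg_left hsum (by positivity)) hcK
        linarith
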